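/- Let n ≥ 1 be an integer, let ψ be a cutoff function with ∫_{ℝⁿ} ψ(|w|) dw > 0, let N ⊆ ℝ^ν be a nonempty closed set, and let u : ℝⁿ → ℝ^ν be continuously differentiable with u(z) ∈ N for all z. Then there is a constant C, depending only on n and ψ, such that for every x ∈ ℝⁿ and every r > 0, dist( (ψ_r ∗ u)(x), N ) ≤ C ( ∫_{B(x,r)} ‖Du(z)‖ⁿ dz )^{1/n}, where ψ_r ∗ u is the normalized mollification of u at scale r and Du(z) the derivative of u at z. -/

import Mathlib

open MeasureTheory Metric

section SUAux

variable {n ν : ℕ}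

lemma su_cont_integrableOn_ball {f : EuclideanSpace ℝ (Fin n) → ℝ}
    (hf : Continuous f) (x : EuclideanSpace ℝ (Fin n)) (r : ℝ) :
    IntegrableOn f (ball x r) :=
  (hf.continuousOn.integrableOn_compact (isCompact_closedBall x r)).mono_set
    ball_subset_closedBall

lemma su_aff_integral (f : EuclideanSpace ℝ (Fin n) → ℝ) (c : EuclideanSpace ℝ (Fin n)) {b : ℝ}
    (hb : 0 < b) :
    ∫ z, f (c + b • z) = (b ^ n)⁻¹ * ∫ z, f z := by
  have h1 : ∫ z : EuclideanSpace ℝ (Fin n), f (c + b • z)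
      = ∫ z : EuclideanSpace ℝ (Fin n), (fun w => f (c + w)) (b • z) := rfl
  rw [h1, Measure.integral_comp_smul_of_nonneg volume (fun w => f (c + w)) b (hR := hb.le),
    finrank_euclideanSpace_fin, smul_eq_mul]
  congr 1
  exact integral_add_left_eq_self f c

/-- Key change-of-variables bound: if the affine map `z ↦ c + b • z` (with `1/2 ≤ b ≤ 1`)
maps the ball into itself, then the integral of `g` composed with it is at most `2^n` times
the integral of `g`. -/
lemma su_inner_z_bound {g : EuclideanSpace ℝ (Fin n) → ℝ} (hg : Continuous g)
    (hg0 : ∀ z, 0 ≤ g z) (x : EuclideanSpace ℝ (Fin n)) (r : ℝ) {b : ℝ}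
    (hb : 1 / 2 ≤ b) {c : EuclideanSpace ℝ (Fin n)}
    (hmem : ∀ z ∈ ball x r, c + b • z ∈ ball x r) :
    ∫ z in ball x r, g (c + b • z) ≤ 2 ^ n * ∫ z in ball x r, g z := by
  have hbpos : 0 < b := lt_of_lt_of_le (by norm_num) hb
  set G := (ball x r).indicator g with hGdef
  have hGint : Integrable G :=
    (su_cont_integrableOn_ball hg x r).integrable_indicator measurableSet_ball
  have hG0 : ∀ w, 0 ≤ G w := fun w => Set.indicator_nonneg (fun z _ => hg0 z) w
  have step1 : ∫ z in ball x r, g (c + b • z) = ∫ z in ball x r, G (c + b • z) := by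
    refine setIntegral_congr_fun measurableSet_ball fun z hz => ?_
    rw [hGdef, Set.indicator_of_mem (hmem z hz)]
  have hcomp : Integrable fun z : EuclideanSpace ℝ (Fin n) => G (c + b • z) := by
    have h1 : Integrable fun w : EuclideanSpace ℝ (Fin n) => G (c + w) :=
      hGint.comp_add_left c
    exact h1.comp_smul hbpos.ne'
  have step2 : ∫ z in ball x r, G (c + b • z) ≤ ∫ z, G (c + b • z) :=
    setIntegral_le_integral hcomp (Filter.Eventually.of_forall fun z => hG0 _)
  have step3 : ∫ z, G (c + b • z) = (b ^ n)⁻¹ * ∫ z in ball x r, g z := by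
    rw [su_aff_integral G c hbpos, integral_indicator measurableSet_ball]
  have hA : 0 ≤ ∫ z in ball x r, g z :=
    setIntegral_nonneg measurableSet_ball fun z _ => hg0 z
  have hpow : (b ^ n)⁻¹ ≤ 2 ^ n := by
    rw [← one_div, div_le_iff₀ (by positivity), ← mul_pow]
    calc (1:ℝ) = 1 ^ n := (one_pow n).symm
    _ ≤ (2 * b) ^ n := by
        apply pow_le_pow_left₀ (by norm_num) (by linarith)
  calc ∫ z in ball x r, g (c + b • z) ≤ (b ^ n)⁻¹ * ∫ z in ball x r, g z := by
        rw [step1, ← step3]; exact step2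
  _ ≤ 2 ^ n * ∫ z in ball x r, g z := by
      exact mul_le_mul_of_nonneg_right hpow hA


/-- Continuity of a parametric integral over a ball, for jointly continuous integrands. -/
lemma su_cont_param {F : EuclideanSpace ℝ (Fin n) × EuclideanSpace ℝ (Fin n) → ℝ}
    (hF : Continuous F) (x : EuclideanSpace ℝ (Fin n)) (r : ℝ) :
    Continuous fun y => ∫ z in ball x r, F (y, z) := by
  rw [continuous_iff_continuousAt]
  intro y₀
  obtain ⟨M, hM⟩ := ((isCompact_closedBall y₀ 1).prod
    (isCompact_closedBall x r)).exists_bound_of_continuousOn hF.continuousOn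
  refine continuousAt_of_dominated (bound := fun _ => M) ?_ ?_ ?_ ?_
  · exact Filter.Eventually.of_forall fun y =>
      ((hF.comp (Continuous.prodMk_right y)).aestronglyMeasurable).restrict
  · filter_upwards [Metric.closedBall_mem_nhds_of_mem (by simp : y₀ ∈ ball y₀ 1)] with y hy
    filter_upwards [ae_restrict_mem measurableSet_ball] with z hz
    exact hM (y, z) ⟨hy, ball_subset_closedBall hz⟩
  · exact integrableOn_const measure_ball_lt_top.ne
  · exact Filter.Eventually.of_forall fun z =>
      (hF.comp (continuous_id.prodMk continuous_const)).continuousAt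

/-- FTC segment bound. -/
lemma su_seg_bound {u : EuclideanSpace ℝ (Fin n) → EuclideanSpace ℝ (Fin ν)}
    (hu : ContDiff ℝ 1 u) (p q : EuclideanSpace ℝ (Fin n)) :
    ‖u q - u p‖ ≤ (∫ s in Set.Ioc (0:ℝ) 1, ‖fderiv ℝ u (p + s • (q - p))‖) * ‖q - p‖ := by
  set v := q - p with hv
  set φ' : ℝ → EuclideanSpace ℝ (Fin ν) := fun s => (fderiv ℝ u (p + s • v)) v with hφ'
  have hline : Continuous fun s : ℝ => p + s • v := by continuity
  have hφ'c : Continuous φ' := by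
    exact ((hu.continuous_fderiv one_ne_zero).comp hline).clm_apply continuous_const
  have hderiv : ∀ s ∈ Set.uIcc (0:ℝ) 1, HasDerivAt (fun t => u (p + t • v)) (φ' s) s := by
    intro s _
    have h1 : HasDerivAt (fun t : ℝ => p + t • v) v s := by
      simpa using ((hasDerivAt_id s).smul_const v).const_add p
    exact ((hu.differentiable one_ne_zero) (p + s • v)).hasFDerivAt.comp_hasDerivAt s h1
  have hFTC : ∫ s in (0:ℝ)..1, φ' s = u (p + (1:ℝ) • v) - u (p + (0:ℝ) • v) :=
    intervalIntegral.integral_eq_sub_of_hasDerivAt hderiv (hφ'c.intervalIntegrable 0 1)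
  have hqp : p + (1:ℝ) • v = q := by rw [one_smul, hv]; abel
  have h0p : p + (0:ℝ) • v = p := by rw [zero_smul, add_zero]
  rw [hqp, h0p] at hFTC
  calc ‖u q - u p‖ = ‖∫ s in (0:ℝ)..1, φ' s‖ := by rw [hFTC]
  _ ≤ ∫ s in (0:ℝ)..1, ‖φ' s‖ :=
      intervalIntegral.norm_integral_le_integral_norm zero_le_one
  _ ≤ ∫ s in (0:ℝ)..1, ‖fderiv ℝ u (p + s • v)‖ * ‖v‖ := by
      apply intervalIntegral.integral_mono_on zero_le_one
        (hφ'c.norm.intervalIntegrable 0 1)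
        (((((hu.continuous_fderiv one_ne_zero).comp hline).norm).mul continuous_const).intervalIntegrable 0 1)
      intro s _
      exact ContinuousLinearMap.le_opNorm _ _
  _ = (∫ s in Set.Ioc (0:ℝ) 1, ‖fderiv ℝ u (p + s • v)‖) * ‖v‖ := by
      rw [intervalIntegral.integral_of_le zero_le_one, ← integral_mul_const]


/-- Hölder inequality on a ball: `∫ g ≤ (∫ gⁿ)^(1/n) * |B|^((n-1)/n)`. -/
lemma su_holder_ball (hn : 1 ≤ n) {g : EuclideanSpace ℝ (Fin n) → ℝ}
    (hg : Continuous g) (hg0 : ∀ z, 0 ≤ g z) (x : EuclideanSpace ℝ (Fin n)) (r : ℝ) :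
    ∫ z in ball x r, g z ≤
      (∫ z in ball x r, g z ^ (n : ℝ)) ^ ((1:ℝ)/n)
        * (volume (ball x r)).toReal ^ ((n - 1 : ℝ)/n) := by
  have hgn_int : IntegrableOn (fun z => g z ^ (n:ℝ)) (ball x r) := by
    apply ((hg.rpow_const (fun z => Or.inr (by positivity))).continuousOn.integrableOn_compact
      (isCompact_closedBall x r)).mono_set ball_subset_closedBall
  have hg_int : IntegrableOn g (ball x r) :=
    (hg.continuousOn.integrableOn_compact (isCompact_closedBall x r)).mono_set
      ball_subset_closedBall
  have hgnn : (0:ℝ) ≤ ∫ z in ball x r, g z ^ (n:ℝ) :=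
    setIntegral_nonneg measurableSet_ball fun z _ => Real.rpow_nonneg (hg0 z) _
  rcases eq_or_lt_of_le hn with h1 | h2
  · -- n = 1
    subst h1
    push_cast
    simp only [Real.rpow_one, sub_self, zero_div, Real.rpow_zero, mul_one, one_div, inv_one]
    exact le_refl _
  · -- 2 ≤ n
    have hp1 : (1:ℝ) < (n:ℝ) := by exact_mod_cast h2
    have hpq : ((n:ℝ)).HolderConjugate ((n:ℝ) / ((n:ℝ) - 1)) :=
      Real.HolderConjugate.conjExponent hp1
    have key := ENNReal.lintegral_mul_le_Lp_mul_Lq (volume.restrict (ball x r)) hpq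
      (f := fun z => ENNReal.ofReal (g z)) (g := fun _ => 1)
      ((ENNReal.measurable_ofReal.comp hg.measurable).aemeasurable) aemeasurable_const
    simp only [Pi.mul_apply, mul_one, ENNReal.one_rpow, lintegral_one,
      Measure.restrict_apply_univ] at key
    have e1 : ∫⁻ z, ENNReal.ofReal (g z) ∂(volume.restrict (ball x r)) = ENNReal.ofReal (∫ z in ball x r, g z) :=
      (ofReal_integral_eq_lintegral_ofReal hg_int
        (Filter.Eventually.of_forall fun z => hg0 z)).symm
    have e2 : ∫⁻ z, ENNReal.ofReal (g z) ^ (n:ℝ) ∂(volume.restrict (ball x r))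
        = ENNReal.ofReal (∫ z in ball x r, g z ^ (n:ℝ)) := by
      have h : ∀ z : EuclideanSpace ℝ (Fin n), ENNReal.ofReal (g z) ^ (n:ℝ) = ENNReal.ofReal (g z ^ (n:ℝ)) := fun z =>
        ENNReal.ofReal_rpow_of_nonneg (hg0 z) (Nat.cast_nonneg n)
      simp_rw [h]
      exact (ofReal_integral_eq_lintegral_ofReal hgn_int
        (Filter.Eventually.of_forall fun z => Real.rpow_nonneg (hg0 z) _)).symm
    rw [e1, e2] at key
    have hne : (ENNReal.ofReal (∫ z in ball x r, g z ^ (n:ℝ))) ^ (1/(n:ℝ))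
        * volume (ball x r) ^ (1/((n:ℝ)/((n:ℝ)-1))) ≠ ⊤ := by
      apply ENNReal.mul_ne_top
      · exact ENNReal.rpow_ne_top_of_nonneg (by positivity) ENNReal.ofReal_ne_top
      · exact ENNReal.rpow_ne_top_of_nonneg (one_div_pos.mpr hpq.symm.pos).le measure_ball_lt_top.ne
    have hmono := ENNReal.toReal_mono hne key
    rw [ENNReal.toReal_ofReal (setIntegral_nonneg measurableSet_ball fun z _ => hg0 z)]
      at hmono
    refine hmono.trans (le_of_eq ?_)
    rw [ENNReal.toReal_mul, ← ENNReal.toReal_rpow, ← ENNReal.toReal_rpow,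
      ENNReal.toReal_ofReal hgnn, one_div_div]


/-- The key Poincaré-type bound for the half of the double integral where the
midpoint-to-`z` segment is integrated in `z`. -/
lemma su_phi_bound {u : EuclideanSpace ℝ (Fin n) → EuclideanSpace ℝ (Fin ν)}
    (hu : ContDiff ℝ 1 u) (x : EuclideanSpace ℝ (Fin n)) {r : ℝ} (hr : 0 < r)
    {y : EuclideanSpace ℝ (Fin n)} (hy : y ∈ ball x r) :
    ∫ z in ball x r, ‖u z - u ((2⁻¹:ℝ) • (y + z))‖
      ≤ r * (2 ^ n * ∫ z in ball x r, ‖fderiv ℝ u z‖) := by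
  set g : EuclideanSpace ℝ (Fin n) → ℝ := fun z => ‖fderiv ℝ u z‖ with hgdef
  have hg : Continuous g := (hu.continuous_fderiv one_ne_zero).norm
  have hg0 : ∀ z, 0 ≤ g z := fun z => norm_nonneg _
  set A := ∫ z in ball x r, g z with hAdef
  have hA0 : 0 ≤ A := setIntegral_nonneg measurableSet_ball fun z _ => hg0 z
  -- the parametric inner function
  set F₂ : EuclideanSpace ℝ (Fin n) → ℝ :=
    fun z => ∫ s in Set.Ioc (0:ℝ) 1, g (((1-s)/2) • y + ((1+s)/2) • z) with hF₂def
  -- the affine identity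
  have haff : ∀ (z : EuclideanSpace ℝ (Fin n)) (s : ℝ),
      (2⁻¹:ℝ) • (y + z) + s • (z - (2⁻¹:ℝ) • (y + z))
        = ((1-s)/2) • y + ((1+s)/2) • z := by
    intro z s
    module
  -- pointwise segment bound
  have hpt : ∀ z ∈ ball x r, ‖u z - u ((2⁻¹:ℝ) • (y + z))‖ ≤ r * F₂ z := by
    intro z hz
    have h1 := su_seg_bound hu ((2⁻¹:ℝ) • (y + z)) z
    have hF₂nn : 0 ≤ F₂ z := setIntegral_nonneg measurableSet_Ioc fun s _ => hg0 _
    have hid : ∀ s : ℝ, ‖fderiv ℝ u ((2⁻¹:ℝ) • (y + z) + s • (z - (2⁻¹:ℝ) • (y + z)))‖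
        = g (((1-s)/2) • y + ((1+s)/2) • z) := by
      intro s; rw [haff z s]
    simp_rw [hid] at h1
    have hnorm : ‖z - (2⁻¹:ℝ) • (y + z)‖ ≤ r := by
      have he : z - (2⁻¹:ℝ) • (y + z) = (2⁻¹:ℝ) • (z - y) := by module
      have hzy : ‖z - y‖ ≤ 2 * r := by
        rw [← dist_eq_norm]
        calc dist z y ≤ dist z x + dist x y := dist_triangle z x y
        _ ≤ r + r := add_le_add (mem_ball.1 hz).le (by rw [dist_comm]; exact (mem_ball.1 hy).le)
        _ = 2 * r := by ring
      rw [he, norm_smul]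
      calc ‖(2⁻¹:ℝ)‖ * ‖z - y‖ ≤ ‖(2⁻¹:ℝ)‖ * (2 * r) :=
            mul_le_mul_of_nonneg_left hzy (norm_nonneg _)
      _ = r := by rw [Real.norm_eq_abs]; rw [abs_of_nonneg (by norm_num : (0:ℝ) ≤ 2⁻¹)]; ring
    calc ‖u z - u ((2⁻¹:ℝ) • (y + z))‖ ≤ F₂ z * ‖z - (2⁻¹:ℝ) • (y + z)‖ := h1
    _ ≤ F₂ z * r := mul_le_mul_of_nonneg_left hnorm hF₂nn
    _ = r * F₂ z := mul_comm _ _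
  -- joint continuity
  have hGcont : Continuous fun p : EuclideanSpace ℝ (Fin n) × ℝ =>
      g (((1 - p.2)/2) • y + ((1 + p.2)/2) • p.1) := by
    apply hg.comp
    exact (((continuous_const.sub continuous_snd).div_const 2).smul continuous_const).add
      (((continuous_const.add continuous_snd).div_const 2).smul continuous_fst)
  -- integrability of F₂ on the ball
  obtain ⟨M, hM⟩ := (isCompact_closedBall x r).exists_bound_of_continuousOn hg.continuousOn
  have hF₂meas : StronglyMeasurable F₂ := by
    apply StronglyMeasurable.integral_prod_right' (f := fun p : EuclideanSpace ℝ (Fin n) × ℝ =>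
      g (((1 - p.2)/2) • y + ((1 + p.2)/2) • p.1))
    exact hGcont.stronglyMeasurable
  have hmemball : ∀ s ∈ Set.Ioc (0:ℝ) 1, ∀ z ∈ ball x r,
      ((1 - s)/2) • y + ((1 + s)/2) • z ∈ ball x r := by
    intro s hs z hz
    have := (convex_ball x r) hy hz (by linarith [hs.2] : (0:ℝ) ≤ (1 - s)/2)
      (by linarith [hs.1.le] : (0:ℝ) ≤ (1 + s)/2) (by ring)
    exact this
  have hF₂bd : ∀ z ∈ ball x r, ‖F₂ z‖ ≤ M := by
    intro z hz
    have : ‖F₂ z‖ ≤ M * (volume (Set.Ioc (0:ℝ) 1)).toReal := by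
      apply norm_setIntegral_le_of_norm_le_const (by simp [Real.volume_Ioc])
      intro s hs
      exact hM _ (ball_subset_closedBall (hmemball s hs z hz))
    simpa [Real.volume_Ioc] using this
  have hF₂int : IntegrableOn F₂ (ball x r) := by
    constructor
    · exact hF₂meas.aestronglyMeasurable
    · apply HasFiniteIntegral.restrict_of_bounded (C := M) measure_ball_lt_top
      filter_upwards [ae_restrict_mem measurableSet_ball] with z hz
      exact hF₂bd z hz
  -- step 1 : compare with r * F₂
  have step1 : ∫ z in ball x r, ‖u z - u ((2⁻¹:ℝ) • (y + z))‖
      ≤ ∫ z in ball x r, r * F₂ z := by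
    apply setIntegral_mono_on
    · exact su_cont_integrableOn_ball ((hu.continuous.sub (hu.continuous.comp
        ((continuous_const.add continuous_id).const_smul (2⁻¹:ℝ)))).norm) x r
    · exact hF₂int.const_mul r
    · exact measurableSet_ball
    · exact hpt
  -- step 2 : swap the z and s integrals
  have hswapint : Integrable (Function.uncurry fun z s =>
      g (((1 - s)/2) • y + ((1 + s)/2) • z))
      ((volume.restrict (ball x r)).prod (volume.restrict (Set.Ioc (0:ℝ) 1))) := by
    rw [Measure.prod_restrict]
    apply (hGcont.continuousOn.integrableOn_compact
      ((isCompact_closedBall x r).prod isCompact_Icc)).mono_set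
    exact Set.prod_mono ball_subset_closedBall Set.Ioc_subset_Icc_self
  have step2 : ∫ z in ball x r, F₂ z
      = ∫ s in Set.Ioc (0:ℝ) 1, ∫ z in ball x r, g (((1 - s)/2) • y + ((1 + s)/2) • z) := by
    exact integral_integral_swap hswapint
  -- step 3 : bound the inner z integral uniformly in s
  have step3 : ∫ s in Set.Ioc (0:ℝ) 1, (∫ z in ball x r, g (((1 - s)/2) • y + ((1 + s)/2) • z))
      ≤ 2 ^ n * A := by
    have hb : ∀ s ∈ Set.Ioc (0:ℝ) 1,
        ‖∫ z in ball x r, g (((1 - s)/2) • y + ((1 + s)/2) • z)‖ ≤ 2 ^ n * A := by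
      intro s hs
      rw [Real.norm_eq_abs, abs_of_nonneg (setIntegral_nonneg measurableSet_ball
        fun z _ => hg0 _)]
      exact su_inner_z_bound hg hg0 x r (by linarith [hs.1.le] : 1/2 ≤ (1+s)/2)
        (fun z hz => hmemball s hs z hz)
    have := norm_setIntegral_le_of_norm_le_const (by simp [Real.volume_Ioc] :
      volume (Set.Ioc (0:ℝ) 1) < ⊤) hb
    rw [measureReal_def, Real.volume_Ioc] at this
    simp only [sub_zero, ENNReal.toReal_ofReal zero_le_one, mul_one] at this
    exact (le_abs_self _).trans (by rwa [← Real.norm_eq_abs])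
  calc ∫ z in ball x r, ‖u z - u ((2⁻¹:ℝ) • (y + z))‖ ≤ ∫ z in ball x r, r * F₂ z := step1
  _ = r * ∫ z in ball x r, F₂ z := by rw [integral_const_mul]
  _ ≤ r * (2 ^ n * A) := by
      apply mul_le_mul_of_nonneg_left _ hr.le
      rw [step2]; exact step3


lemma su_alg (n : ℕ) (r I e f Vn R : ℝ) (hrr : r * r ^ (n-1) = R) (hI : I ≠ 0)
    (hR0 : R ≠ 0) :
    (R * I)⁻¹ * ((R * I)⁻¹ * (2 * (r * (2 ^ n * (f * (r ^ (n-1) * e))) * (R * Vn))))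
      = 2 ^ (n+1) * Vn * e * (I⁻¹ * I⁻¹) * f := by
  have hone : R * R * (R⁻¹ * R⁻¹) = 1 := by field_simp
  calc (R * I)⁻¹ * ((R * I)⁻¹ * (2 * (r * (2 ^ n * (f * (r ^ (n-1) * e))) * (R * Vn))))
      = 2 ^ (n+1) * Vn * e * (I⁻¹ * I⁻¹) * f * ((r * r ^ (n-1)) * R * (R⁻¹ * R⁻¹)) := by
        rw [mul_inv]; ring
  _ = 2 ^ (n+1) * Vn * e * (I⁻¹ * I⁻¹) * f * (R * R * (R⁻¹ * R⁻¹)) := by rw [hrr]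
  _ = 2 ^ (n+1) * Vn * e * (I⁻¹ * I⁻¹) * f := by rw [hone, mul_one]


end SUAux

/-- (Smooth Euclidean Schoen–Uhlenbeck lemma.) Let `ψ` be a cutoff function with
`∫_{ℝⁿ} ψ(|w|) dw > 0` and let `N ⊆ ℝ^ν` be nonempty and closed. There is `C = C(n, ψ)` such
that for every `C¹` map `u : ℝⁿ → ℝ^ν` with values in `N`, every `x` and every `r > 0`,
`dist((ψ_r ∗ u)(x), N) ≤ C (∫_{B(x,r)} ‖Du‖ⁿ)^{1/n}`. -/
theorem stmt_8 (n : ℕ) (hn : 1 ≤ n) (ψ : ℝ → ℝ) (L : NNReal)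
    (hψ_lip : LipschitzOnWith L ψ (Set.Ici 0))
    (hψ_mem : ∀ t : ℝ, 0 ≤ t → ψ t ∈ Set.Icc (0 : ℝ) 1)
    (hψ_supp : ∀ t : ℝ, 1 ≤ t → ψ t = 0)
    (hψ_pos : 0 < ∫ w : EuclideanSpace ℝ (Fin n), ψ ‖w‖) :
    ∃ C : ℝ, 0 < C ∧
      ∀ (ν : ℕ) (N : Set (EuclideanSpace ℝ (Fin ν))), N.Nonempty → IsClosed N →
      ∀ (u : EuclideanSpace ℝ (Fin n) → EuclideanSpace ℝ (Fin ν)), ContDiff ℝ 1 u →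
        (∀ z, u z ∈ N) →
      ∀ (x : EuclideanSpace ℝ (Fin n)) (r : ℝ), 0 < r →
        Metric.infDist
            ((∫ z, ψ (dist x z / r))⁻¹ • ∫ z, ψ (dist x z / r) • u z) N
          ≤ C * (∫ z in ball x r, ‖fderiv ℝ u z‖ ^ (n : ℝ)) ^ ((1 : ℝ) / n) := by
  classical
  haveI : Nontrivial (EuclideanSpace ℝ (Fin n)) :=
    Module.nontrivial_of_finrank_pos (R := ℝ)
      (by rw [finrank_euclideanSpace_fin]; omega)
  set I : ℝ := ∫ w : EuclideanSpace ℝ (Fin n), ψ ‖w‖ with hIdef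
  set Vn : ℝ := (volume (ball (0 : EuclideanSpace ℝ (Fin n)) 1)).toReal with hVndef
  have hVn : 0 < Vn := ENNReal.toReal_pos (measure_ball_pos volume _ one_pos).ne'
    measure_ball_lt_top.ne
  refine ⟨2 ^ (n+1) * Vn * Vn ^ ((n - 1 : ℝ)/n) * (I⁻¹ * I⁻¹), by positivity, ?_⟩
  intro ν N hNne hNcl u hu humem x r hr
  -- basic continuity facts
  have hψcont : ContinuousOn ψ (Set.Ici 0) := hψ_lip.continuousOn
  set w : EuclideanSpace ℝ (Fin n) → ℝ := fun z => ψ (dist x z / r) with hwdef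
  have hwcont : Continuous w := by
    apply hψcont.comp_continuous (by fun_prop)
    intro z
    exact div_nonneg dist_nonneg hr.le
  have hw0 : ∀ z, 0 ≤ w z := fun z =>
    (hψ_mem _ (div_nonneg dist_nonneg hr.le)).1
  have hw1 : ∀ z, w z ≤ 1 := fun z =>
    (hψ_mem _ (div_nonneg dist_nonneg hr.le)).2
  have hwsupp : ∀ z, z ∉ ball x r → w z = 0 := by
    intro z hz
    apply hψ_supp
    rw [mem_ball, dist_comm] at hz
    rw [le_div_iff₀ hr]
    simpa using hz
  have hwcs : HasCompactSupport w := by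
    apply HasCompactSupport.intro (isCompact_closedBall x r)
    intro z hz
    exact hwsupp z fun hb => hz (ball_subset_closedBall hb)
  -- the normalization constant
  have hKval : ∫ z, w z = r ^ n * I := by
    have h1 : ∀ z, w z = (fun v : EuclideanSpace ℝ (Fin n) => ψ (‖v‖ / r)) (z - x) := by
      intro z
      simp only [hwdef]
      rw [dist_eq_norm']
    simp_rw [h1]
    rw [integral_sub_right_eq_self (fun v : EuclideanSpace ℝ (Fin n) => ψ (‖v‖ / r)) x]
    have h2 : ∀ v : EuclideanSpace ℝ (Fin n),
        ψ (‖v‖ / r) = (fun v : EuclideanSpace ℝ (Fin n) => ψ ‖v‖) (r⁻¹ • v) := by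
      intro v
      congr 1
      rw [norm_smul, norm_inv, Real.norm_eq_abs, abs_of_nonneg hr.le, div_eq_inv_mul]
    simp_rw [h2]
    rw [Measure.integral_comp_inv_smul_of_nonneg volume
      (fun v : EuclideanSpace ℝ (Fin n) => ψ ‖v‖) hr.le, finrank_euclideanSpace_fin,
      smul_eq_mul, hIdef]
  have hK0 : 0 < ∫ z, w z := by
    rw [hKval]; positivity
  set K : ℝ := ∫ z, w z with hKdef
  -- integrability
  have hwint : Integrable w := hwcont.integrable_of_hasCompactSupport hwcs
  have hwuint : Integrable (fun z => w z • u z) := by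
    apply (hwcont.smul hu.continuous).integrable_of_hasCompactSupport
    exact hwcs.smul_right
  set ubar : EuclideanSpace ℝ (Fin ν) := K⁻¹ • ∫ z, w z • u z with hubardef
  set D : EuclideanSpace ℝ (Fin n) → ℝ := fun y => ‖ubar - u y‖ with hDdef
  have hDcont : Continuous D := (continuous_const.sub hu.continuous).norm
  have hD0 : ∀ y, 0 ≤ D y := fun y => norm_nonneg _
  set g : EuclideanSpace ℝ (Fin n) → ℝ := fun z => ‖fderiv ℝ u z‖ with hgdef
  have hgcont : Continuous g := (hu.continuous_fderiv one_ne_zero).norm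
  have hg0 : ∀ z, 0 ≤ g z := fun z => norm_nonneg _
  set A : ℝ := ∫ z in ball x r, g z with hAdef
  have hA0 : 0 ≤ A := setIntegral_nonneg measurableSet_ball fun z _ => hg0 z
  set En : ℝ := ∫ z in ball x r, g z ^ (n:ℝ) with hEndef
  set VB : ℝ := (volume (ball x r)).toReal with hVBdef
  have hVBval : VB = r ^ n * Vn := by
    rw [hVBdef, Measure.addHaar_ball volume x hr.le, ENNReal.toReal_mul, ENNReal.toReal_ofReal
      (by positivity), finrank_euclideanSpace_fin, hVndef]
  have hVB0 : 0 ≤ VB := ENNReal.toReal_nonneg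
  -- step 4 : K * infDist ≤ ∫ w y * D y
  have step4 : K * infDist ubar N ≤ ∫ y, w y * D y := by
    have heq : K * infDist ubar N = ∫ y, w y * infDist ubar N := by
      rw [integral_mul_const, hKdef, mul_comm]
    rw [heq]
    apply integral_mono (hwint.mul_const _) ((hwcont.mul hDcont).integrable_of_hasCompactSupport
      hwcs.mul_right)
    intro y
    apply mul_le_mul_of_nonneg_left _ (hw0 y)
    show infDist ubar N ≤ ‖ubar - u y‖
    rw [← dist_eq_norm]
    exact infDist_le_dist_of_mem (humem y)
  -- ∫ w D ≤ ∫_ball D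
  have step4b : ∫ y, w y * D y ≤ ∫ y in ball x r, D y := by
    have hind : Integrable ((ball x r).indicator D) :=
      (su_cont_integrableOn_ball hDcont x r).integrable_indicator measurableSet_ball
    have hmono : ∀ y, w y * D y ≤ (ball x r).indicator D y := by
      intro y
      by_cases hy : y ∈ ball x r
      · rw [Set.indicator_of_mem hy]
        calc w y * D y ≤ 1 * D y := mul_le_mul_of_nonneg_right (hw1 y) (hD0 y)
        _ = D y := one_mul _
      · rw [Set.indicator_of_notMem hy, hwsupp y hy, zero_mul]
    calc ∫ y, w y * D y ≤ ∫ y, (ball x r).indicator D y :=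
          integral_mono ((hwcont.mul hDcont).integrable_of_hasCompactSupport hwcs.mul_right)
            hind hmono
    _ = ∫ y in ball x r, D y := integral_indicator measurableSet_ball
  -- step 5 : D y ≤ K⁻¹ * ∫_ball ‖u z - u y‖
  have step5 : ∀ y, D y ≤ K⁻¹ * ∫ z in ball x r, ‖u z - u y‖ := by
    intro y
    have huyint : Integrable (fun z => w z • u y) := hwint.smul_const (u y)
    have hsubint : Integrable (fun z => w z • (u z - u y)) := by
      simp_rw [smul_sub]
      exact hwuint.sub huyint
    have e1 : ubar - u y = K⁻¹ • ∫ z, w z • (u z - u y) := by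
      have e2 : ∫ z, w z • (u z - u y) = (∫ z, w z • u z) - K • u y := by
        simp_rw [smul_sub]
        rw [integral_sub hwuint huyint, integral_smul_const, hKdef]
      rw [e2, smul_sub, smul_smul, inv_mul_cancel₀ hK0.ne', one_smul, hubardef]
    have e3 : D y ≤ K⁻¹ * ∫ z, ‖w z • (u z - u y)‖ := by
      rw [hDdef]
      simp only []
      rw [e1, norm_smul, norm_inv, Real.norm_eq_abs, abs_of_nonneg hK0.le]
      apply mul_le_mul_of_nonneg_left (norm_integral_le_integral_norm _)
        (inv_nonneg.2 hK0.le)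
    refine e3.trans ?_
    apply mul_le_mul_of_nonneg_left _ (inv_nonneg.2 hK0.le)
    have hnormint : Integrable (fun z => ‖w z • (u z - u y)‖) := hsubint.norm
    have hindint : Integrable ((ball x r).indicator fun z => ‖u z - u y‖) :=
      ((su_cont_integrableOn_ball ((hu.continuous.sub continuous_const).norm) x r)).integrable_indicator
        measurableSet_ball
    calc ∫ z, ‖w z • (u z - u y)‖
        ≤ ∫ z, (ball x r).indicator (fun z => ‖u z - u y‖) z := by
          apply integral_mono hnormint hindint
          intro z
          show ‖w z • (u z - u y)‖ ≤ (ball x r).indicator (fun z => ‖u z - u y‖) z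
          rw [norm_smul, Real.norm_eq_abs, abs_of_nonneg (hw0 z)]
          by_cases hz : z ∈ ball x r
          · rw [Set.indicator_of_mem hz]
            calc w z * ‖u z - u y‖ ≤ 1 * ‖u z - u y‖ :=
                  mul_le_mul_of_nonneg_right (hw1 z) (norm_nonneg _)
            _ = ‖u z - u y‖ := one_mul _
          · rw [Set.indicator_of_notMem hz, hwsupp z hz, zero_mul]
    _ = ∫ z in ball x r, ‖u z - u y‖ := integral_indicator measurableSet_ball
  -- triangle inequality through midpoints
  set Φ : EuclideanSpace ℝ (Fin n) → ℝ :=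
    fun y => ∫ z in ball x r, ‖u z - u ((2⁻¹:ℝ) • (y + z))‖ with hΦdef
  set Φ' : EuclideanSpace ℝ (Fin n) → ℝ :=
    fun y => ∫ z in ball x r, ‖u y - u ((2⁻¹:ℝ) • (y + z))‖ with hΦ'def
  have hmidcont : Continuous fun p : EuclideanSpace ℝ (Fin n) × EuclideanSpace ℝ (Fin n) =>
      (2⁻¹:ℝ) • (p.1 + p.2) := ((continuous_fst.add continuous_snd).const_smul (2⁻¹:ℝ))
  have hΦcont : Continuous Φ := by
    apply su_cont_param (F := fun p : EuclideanSpace ℝ (Fin n) × EuclideanSpace ℝ (Fin n) =>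
      ‖u p.2 - u ((2⁻¹:ℝ) • (p.1 + p.2))‖)
    exact ((hu.continuous.comp continuous_snd).sub (hu.continuous.comp hmidcont)).norm
  have hΦ'cont : Continuous Φ' := by
    apply su_cont_param (F := fun p : EuclideanSpace ℝ (Fin n) × EuclideanSpace ℝ (Fin n) =>
      ‖u p.1 - u ((2⁻¹:ℝ) • (p.1 + p.2))‖)
    exact ((hu.continuous.comp continuous_fst).sub (hu.continuous.comp hmidcont)).norm
  have htri : ∀ y, (∫ z in ball x r, ‖u z - u y‖) ≤ Φ y + Φ' y := by
    intro y
    have hint1 : IntegrableOn (fun z => ‖u z - u ((2⁻¹:ℝ) • (y + z))‖) (ball x r) := by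
      apply su_cont_integrableOn_ball _ x r
      exact (hu.continuous.sub (hu.continuous.comp
        ((continuous_const.add continuous_id).const_smul (2⁻¹:ℝ)))).norm
    have hint2 : IntegrableOn (fun z => ‖u y - u ((2⁻¹:ℝ) • (y + z))‖) (ball x r) := by
      apply su_cont_integrableOn_ball _ x r
      exact (continuous_const.sub (hu.continuous.comp
        ((continuous_const.add continuous_id).const_smul (2⁻¹:ℝ)))).norm
    calc ∫ z in ball x r, ‖u z - u y‖
        ≤ ∫ z in ball x r, (‖u z - u ((2⁻¹:ℝ) • (y + z))‖ + ‖u y - u ((2⁻¹:ℝ) • (y + z))‖) := by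
          apply setIntegral_mono_on
            (su_cont_integrableOn_ball ((hu.continuous.sub continuous_const).norm) x r)
            (hint1.add hint2) measurableSet_ball
          intro z _
          calc ‖u z - u y‖ = ‖(u z - u ((2⁻¹:ℝ) • (y + z))) - (u y - u ((2⁻¹:ℝ) • (y + z)))‖ := by
                congr 1; abel
          _ ≤ ‖u z - u ((2⁻¹:ℝ) • (y + z))‖ + ‖u y - u ((2⁻¹:ℝ) • (y + z))‖ := norm_sub_le _ _
    _ = Φ y + Φ' y := integral_add hint1 hint2
  -- the symmetry swap : ∫_B Φ' = ∫_B Φ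
  have hswap : ∫ y in ball x r, Φ' y = ∫ y in ball x r, Φ y := by
    have hjc : Continuous (Function.uncurry fun y z : EuclideanSpace ℝ (Fin n) =>
        ‖u y - u ((2⁻¹:ℝ) • (y + z))‖) := by
      exact ((hu.continuous.comp continuous_fst).sub (hu.continuous.comp hmidcont)).norm
    have hji : Integrable (Function.uncurry fun y z : EuclideanSpace ℝ (Fin n) =>
        ‖u y - u ((2⁻¹:ℝ) • (y + z))‖)
        ((volume.restrict (ball x r)).prod (volume.restrict (ball x r))) := by
      rw [Measure.prod_restrict]
      apply (hjc.continuousOn.integrableOn_compact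
        ((isCompact_closedBall x r).prod (isCompact_closedBall x r))).mono_set
      exact Set.prod_mono ball_subset_closedBall ball_subset_closedBall
    have h := integral_integral_swap hji
    rw [hΦ'def, hΦdef]
    simp only []
    rw [h]
    apply setIntegral_congr_fun measurableSet_ball
    intro a _
    apply setIntegral_congr_fun measurableSet_ball
    intro b _
    simp only [add_comm b a]
  -- bound ∫_B Φ
  have hΦbound : ∫ y in ball x r, Φ y ≤ r * (2 ^ n * A) * VB := by
    have := norm_setIntegral_le_of_norm_le_const (μ := volume) (s := ball x r)
      measure_ball_lt_top (C := r * (2 ^ n * A)) (f := Φ) ?_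
    · exact (le_abs_self _).trans ((Real.norm_eq_abs _) ▸ this)
    · intro y hy
      rw [Real.norm_eq_abs, abs_of_nonneg (setIntegral_nonneg measurableSet_ball
        fun z _ => norm_nonneg _)]
      exact su_phi_bound hu x hr hy
  -- combine the y-integral
  have hDbound : ∫ y in ball x r, D y ≤ K⁻¹ * (r * (2 ^ n * A) * VB + ∫ y in ball x r, Φ' y) := by
    have hptb : ∀ y ∈ ball x r, D y ≤ K⁻¹ * (r * (2 ^ n * A) + Φ' y) := by
      intro y hy
      refine (step5 y).trans ?_
      apply mul_le_mul_of_nonneg_left _ (inv_nonneg.2 hK0.le)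
      refine (htri y).trans ?_
      apply add_le_add_left (su_phi_bound hu x hr hy)
    calc ∫ y in ball x r, D y ≤ ∫ y in ball x r, K⁻¹ * (r * (2 ^ n * A) + Φ' y) := by
          apply setIntegral_mono_on (su_cont_integrableOn_ball hDcont x r) _
            measurableSet_ball hptb
          exact ((integrableOn_const measure_ball_lt_top.ne).add
            (su_cont_integrableOn_ball hΦ'cont x r)).const_mul K⁻¹
    _ = K⁻¹ * (r * (2 ^ n * A) * VB + ∫ y in ball x r, Φ' y) := by
        have hc1 : IntegrableOn (fun _ => r * (2 ^ n * A)) (ball x r) :=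
          integrableOn_const measure_ball_lt_top.ne
        have hc2 : IntegrableOn Φ' (ball x r) := su_cont_integrableOn_ball hΦ'cont x r
        rw [integral_const_mul, integral_add hc1
          hc2, setIntegral_const, measureReal_def, smul_eq_mul, hVBdef]
        ring_nf
  -- all together
  have hmain : infDist ubar N ≤ K⁻¹ * (K⁻¹ * (2 * (r * (2 ^ n * A) * VB))) := by
    have h1 : K * infDist ubar N ≤ K⁻¹ * (2 * (r * (2 ^ n * A) * VB)) := by
      calc K * infDist ubar N ≤ ∫ y, w y * D y := step4
      _ ≤ ∫ y in ball x r, D y := step4b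
      _ ≤ K⁻¹ * (r * (2 ^ n * A) * VB + ∫ y in ball x r, Φ' y) := hDbound
      _ ≤ K⁻¹ * (2 * (r * (2 ^ n * A) * VB)) := by
          apply mul_le_mul_of_nonneg_left _ (inv_nonneg.2 hK0.le)
          linarith [hΦbound, hswap]
    calc infDist ubar N = K⁻¹ * (K * infDist ubar N) := by
          rw [← mul_assoc, inv_mul_cancel₀ hK0.ne', one_mul]
    _ ≤ K⁻¹ * (K⁻¹ * (2 * (r * (2 ^ n * A) * VB))) := by
        apply mul_le_mul_of_nonneg_left h1 (inv_nonneg.2 hK0.le)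
  -- Hölder
  have hhold : A ≤ En ^ ((1:ℝ)/n) * VB ^ ((n - 1 : ℝ)/n) :=
    su_holder_ball hn hgcont hg0 x r
  have hEn0 : 0 ≤ En := setIntegral_nonneg measurableSet_ball fun z _ =>
    Real.rpow_nonneg (hg0 z) _
  -- final computation
  have hfinal : K⁻¹ * (K⁻¹ * (2 * (r * (2 ^ n * (En ^ ((1:ℝ)/n) * VB ^ ((n - 1 : ℝ)/n))) * VB)))
      = (2 ^ (n+1) * Vn * Vn ^ ((n - 1 : ℝ)/n) * (I⁻¹ * I⁻¹)) * En ^ ((1:ℝ)/n) := by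
    have hVBpow : VB ^ ((n - 1 : ℝ)/n) = (r ^ (n-1)) * Vn ^ ((n - 1 : ℝ)/n) := by
      rw [hVBval, Real.mul_rpow (by positivity) hVn.le]
      congr 1
      rw [← Real.rpow_natCast r n, ← Real.rpow_mul hr.le, ← Real.rpow_natCast r (n-1)]
      congr 1
      have : ((n - 1 : ℕ) : ℝ) = (n : ℝ) - 1 := by
        rw [Nat.cast_sub hn, Nat.cast_one]
      rw [this]
      field_simp
    have hrr : r * r ^ (n-1) = r ^ n := by
      rw [← pow_succ' r (n-1), Nat.sub_add_cancel hn]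
    rw [hKval, hVBpow, hVBval]
    have := su_alg n r I (Vn ^ ((n - 1 : ℝ)/n)) (En ^ ((1:ℝ)/n)) Vn (r ^ n) hrr
      hψ_pos.ne' (by positivity)
    linarith [this]
  calc infDist ubar N ≤ K⁻¹ * (K⁻¹ * (2 * (r * (2 ^ n * A) * VB))) := hmain
  _ ≤ K⁻¹ * (K⁻¹ * (2 * (r * (2 ^ n * (En ^ ((1:ℝ)/n) * VB ^ ((n - 1 : ℝ)/n))) * VB))) := by
      have hKinv : 0 ≤ K⁻¹ := inv_nonneg.2 hK0.le
      apply mul_le_mul_of_nonneg_left _ hKinv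
      apply mul_le_mul_of_nonneg_left _ hKinv
      have : r * (2 ^ n * A) * VB ≤ r * (2 ^ n * (En ^ ((1:ℝ)/n) * VB ^ ((n - 1 : ℝ)/n))) * VB := by
        apply mul_le_mul_of_nonneg_right _ hVB0
        apply mul_le_mul_of_nonneg_left _ hr.le
        exact mul_le_mul_of_nonneg_left hhold (by positivity)
      linarith
  _ = (2 ^ (n+1) * Vn * Vn ^ ((n - 1 : ℝ)/n) * (I⁻¹ * I⁻¹)) * En ^ ((1:ℝ)/n) := hfinal
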